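/- Determinant cross ratios satisfy e_{𝐢;j,k,t,s} = 1 − (1 − e_{𝐢;j,k,r,s})/(1 − e_{𝐢;j,k,r,t}) on ℰⁿ(ℂ^m,gp), for distinct indices i_1,...,i_{m-1},j,k,r,s,t. -/

import Mathlib

open Function Matrix


/-- The affine determinant `d_{a_1,...,a_{m+1}}(q)`: the determinant of the
`(m+1)×(m+1)` matrix whose `r`-th row is `(q_{a_r}, 1)`, for points `q_i ∈ ℂ^m`. -/
noncomputable def dA {n m : ℕ} (q : Fin n → Fin m → ℂ) (a : Fin (m + 1) → Fin n) : ℂ :=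
  (Matrix.of (fun r c : Fin (m + 1) => Fin.snoc (q (a r)) (1 : ℂ) c)).det

/-- `q ∈ ℰⁿ(ℂ^m, gp)`: no `m+1` of the points lie on an affine hyperplane. -/
def GenPos {n m : ℕ} (q : Fin n → Fin m → ℂ) : Prop :=
  ∀ a : Fin (m + 1) → Fin n, Function.Injective a → dA q a ≠ 0

/-- The determinant cross ratio `e_{𝐢;j,k,l,s}` (here the paper's `m` is `M + 1`,
so `𝐢` has `m - 1 = M` entries and points lie in `ℂ^{M+1}`). -/
noncomputable def ecr {n M : ℕ} (q : Fin n → Fin (M + 1) → ℂ) (i : Fin M → Fin n)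
    (j k l s : Fin n) : ℂ :=
  (dA q (Fin.snoc (Fin.snoc i j) k) * dA q (Fin.snoc (Fin.snoc i l) s)) /
  (dA q (Fin.snoc (Fin.snoc i j) l) * dA q (Fin.snoc (Fin.snoc i k) s))


noncomputable def Bd {M : ℕ} (u : Fin M → Fin (M+2) → ℂ) (x y : Fin (M+2) → ℂ) : ℂ :=
  (Matrix.of (Fin.snoc (Fin.snoc u x) y)).det

lemma Bd_self {M : ℕ} (u : Fin M → Fin (M+2) → ℂ) (x : Fin (M+2) → ℂ) :
    Bd u x x = 0 := by
  apply Matrix.det_zero_of_row_eq (i := (Fin.last M).castSucc) (j := Fin.last (M+1))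
  · exact (Fin.castSucc_lt_last _).ne
  · funext c
    show (Fin.snoc (Fin.snoc u x) x : Fin (M+2) → Fin (M+2) → ℂ) ((Fin.last M).castSucc) c
      = (Fin.snoc (Fin.snoc u x) x : Fin (M+2) → Fin (M+2) → ℂ) (Fin.last (M+1)) c
    rw [Fin.snoc_castSucc, Fin.snoc_last, Fin.snoc_last]

lemma Bd_row {M : ℕ} (u : Fin M → Fin (M+2) → ℂ) (p : Fin M) (y : Fin (M+2) → ℂ) :
    Bd u (u p) y = 0 := by
  apply Matrix.det_zero_of_row_eq (i := p.castSucc.castSucc) (j := (Fin.last M).castSucc)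
  · simp [Fin.ext_iff]; omega
  · funext c
    show (Fin.snoc (Fin.snoc u (u p)) y : Fin (M+2) → Fin (M+2) → ℂ) (p.castSucc.castSucc) c
      = (Fin.snoc (Fin.snoc u (u p)) y : Fin (M+2) → Fin (M+2) → ℂ) ((Fin.last M).castSucc) c
    rw [Fin.snoc_castSucc, Fin.snoc_castSucc, Fin.snoc_castSucc, Fin.snoc_last]

lemma Bd_swap {M : ℕ} (u : Fin M → Fin (M+2) → ℂ) (x y : Fin (M+2) → ℂ) :
    Bd u y x = - Bd u x y := by
  have hm : (Matrix.of (Fin.snoc (Fin.snoc u x) y)).submatrix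
      (Equiv.swap ((Fin.last M).castSucc) (Fin.last (M+1))) id
      = Matrix.of (Fin.snoc (Fin.snoc u y) x) := by
    ext p c
    refine Fin.lastCases ?_ (fun q => ?_) p
    · simp [Equiv.swap_apply_right]
    · refine Fin.lastCases ?_ (fun q' => ?_) q
      · simp [Equiv.swap_apply_left]
      · rw [Matrix.submatrix_apply, Equiv.swap_apply_of_ne_of_ne]
        · simp
        · simp [Fin.ext_iff]; omega
        · simp [Fin.ext_iff]; omega
  have h2 := Matrix.det_permute (Equiv.swap ((Fin.last M).castSucc) (Fin.last (M+1)))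
    (Matrix.of (Fin.snoc (Fin.snoc u x) y))
  rw [hm, Equiv.Perm.sign_swap (Fin.castSucc_lt_last _).ne] at h2
  unfold Bd
  rw [h2]
  simp

lemma update_snoc {M : ℕ} (u : Fin M → Fin (M+2) → ℂ) (x₀ x y : Fin (M+2) → ℂ) :
    Function.update (Fin.snoc (Fin.snoc u x₀) y) ((Fin.last M).castSucc) x
      = (Fin.snoc (Fin.snoc u x) y : Fin (M+2) → Fin (M+2) → ℂ) := by
  funext p
  refine Fin.lastCases ?_ (fun q => ?_) p
  · rw [Function.update_of_ne (Fin.castSucc_lt_last _).ne', Fin.snoc_last, Fin.snoc_last]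
  · refine Fin.lastCases ?_ (fun q' => ?_) q
    · rw [Function.update_self, Fin.snoc_castSucc, Fin.snoc_last]
    · rw [Function.update_of_ne (by simp [Fin.ext_iff]; omega), Fin.snoc_castSucc,
        Fin.snoc_castSucc, Fin.snoc_castSucc, Fin.snoc_castSucc]

noncomputable def Td {M : ℕ} (u : Fin M → Fin (M+2) → ℂ) (y : Fin (M+2) → ℂ) :
    (Fin (M+2) → ℂ) →ₗ[ℂ] ℂ :=
  Matrix.detRowAlternating.toMultilinearMap.toLinearMap
    (Fin.snoc (Fin.snoc u 0) y) ((Fin.last M).castSucc)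

lemma Td_apply {M : ℕ} (u : Fin M → Fin (M+2) → ℂ) (y x : Fin (M+2) → ℂ) :
    Td u y x = Bd u x y := by
  show Matrix.detRowAlternating
    (Function.update (Fin.snoc (Fin.snoc u 0) y) ((Fin.last M).castSucc) x) = _
  rw [update_snoc]
  rfl

lemma plucker {M : ℕ} (u : Fin M → Fin (M+2) → ℂ) (a b c d : Fin (M+2) → ℂ)
    (hbc : Bd u b c ≠ 0) :
    Bd u a b * Bd u c d - Bd u a c * Bd u b d + Bd u a d * Bd u b c = 0 := by
  classical
  set L : (Fin (M+2) → ℂ) →ₗ[ℂ] ℂ :=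
    Bd u c d • Td u b - Bd u b d • Td u c + Bd u b c • Td u d with hLdef
  have hLa : ∀ x, L x = Bd u c d * Bd u x b - Bd u b d * Bd u x c + Bd u b c * Bd u x d := by
    intro x
    simp [hLdef, Td_apply, smul_eq_mul]
  have hvanish : ∀ p : Fin (M+2),
      L ((Fin.snoc (Fin.snoc u b) c : Fin (M+2) → Fin (M+2) → ℂ) p) = 0 := by
    intro p
    refine Fin.lastCases ?_ (fun q => ?_) p
    · rw [Fin.snoc_last, hLa, Bd_self, Bd_swap u b c]; ring
    · rw [Fin.snoc_castSucc]
      refine Fin.lastCases ?_ (fun q' => ?_) q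
      · rw [Fin.snoc_last, hLa, Bd_self]; ring
      · rw [Fin.snoc_castSucc, hLa, Bd_row, Bd_row, Bd_row]; ring
  set E : Matrix (Fin (M+2)) (Fin (M+2)) ℂ := Matrix.of (Fin.snoc (Fin.snoc u b) c) with hE
  have hunit : IsUnit E.transpose.det := by
    rw [Matrix.det_transpose]
    exact isUnit_iff_ne_zero.mpr hbc
  have hsolve : E.transpose *ᵥ (E.transpose⁻¹ *ᵥ a) = a := by
    rw [Matrix.mulVec_mulVec, Matrix.mul_nonsing_inv _ hunit, Matrix.one_mulVec]
  set kk := E.transpose⁻¹ *ᵥ a with hkk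
  have ha : a = ∑ p : Fin (M+2), kk p • E p := by
    rw [← hsolve]
    funext j
    simp [Matrix.mulVec, dotProduct, Matrix.transpose_apply, Finset.sum_apply,
      mul_comm]
  have hLa0 : L a = 0 := by
    conv_lhs => rw [ha]
    rw [map_sum]
    refine Finset.sum_eq_zero fun p _ => ?_
    rw [LinearMap.map_smul]
    have : L (E p) = 0 := hvanish p
    rw [this, smul_zero]
  have h := hLa a
  rw [hLa0] at h
  linear_combination -h

lemma dA_eq_Bd {n M : ℕ} (q : Fin n → Fin (M+1) → ℂ) (i : Fin M → Fin n) (x y : Fin n) :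
    dA q (Fin.snoc (Fin.snoc i x) y)
      = Bd (fun p => (Fin.snoc (q (i p)) (1:ℂ) : Fin (M+2) → ℂ))
          (Fin.snoc (q x) (1:ℂ)) (Fin.snoc (q y) (1:ℂ)) := by
  have hcomp : ((fun z => (Fin.snoc (q z) (1:ℂ) : Fin (M+2) → ℂ)) ∘ (Fin.snoc (Fin.snoc i x) y : Fin (M+2) → Fin n))
      = Fin.snoc (Fin.snoc ((fun z => (Fin.snoc (q z) (1:ℂ) : Fin (M+2) → ℂ)) ∘ i) (Fin.snoc (q x) (1:ℂ)))
          (Fin.snoc (q y) (1:ℂ)) := by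
    simp [Fin.comp_snoc]
  unfold dA Bd
  exact congrArg Matrix.det (congrArg Matrix.of hcomp)

lemma snoc_inj {α : Type*} {m' : ℕ} {f : Fin m' → α} {x : α}
    (hf : Function.Injective f) (hx : ∀ p, f p ≠ x) :
    Function.Injective (Fin.snoc f x : Fin (m'+1) → α) := by
  intro p q h
  rcases Fin.eq_castSucc_or_eq_last p with ⟨p', rfl⟩ | rfl <;>
    rcases Fin.eq_castSucc_or_eq_last q with ⟨q', rfl⟩ | rfl
  · rw [Fin.snoc_castSucc, Fin.snoc_castSucc] at h
    exact congrArg Fin.castSucc (hf h)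
  · rw [Fin.snoc_castSucc, Fin.snoc_last] at h
    exact absurd h (hx p')
  · rw [Fin.snoc_last, Fin.snoc_castSucc] at h
    exact absurd h.symm (hx q')
  · rfl

lemma snoc2_inj {α : Type*} {m' : ℕ} {f : Fin m' → α} {x y : α}
    (hf : Function.Injective f) (hx : ∀ p, f p ≠ x) (hy : ∀ p, f p ≠ y) (hxy : x ≠ y) :
    Function.Injective (Fin.snoc (Fin.snoc f x) y : Fin (m'+2) → α) := by
  refine snoc_inj (snoc_inj hf hx) ?_
  intro p
  rcases Fin.eq_castSucc_or_eq_last p with ⟨p', rfl⟩ | rfl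
  · rw [Fin.snoc_castSucc]; exact hy p'
  · rw [Fin.snoc_last]; exact hxy

/-- `e_{𝐢;j,k,t,s} = 1 − (1 − e_{𝐢;j,k,r,s})/(1 − e_{𝐢;j,k,r,t})` on `ℰⁿ(ℂ^m, gp)`,
for distinct indices `i_1,...,i_{m-1},j,k,r,s,t` (the paper's `m` is `M + 1`). -/
theorem dcr_third_slot_relation {n M : ℕ} (hn : M + 5 ≤ n)
    (q : Fin n → Fin (M + 1) → ℂ) (hq : GenPos q)
    (i : Fin M → Fin n) (j k r s t : Fin n)
    (hdist : Function.Injective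
      (Fin.snoc (Fin.snoc (Fin.snoc (Fin.snoc (Fin.snoc i j) k) r) s) t :
        Fin (M + 5) → Fin n)) :
    ecr q i j k t s = 1 - (1 - ecr q i j k r s) / (1 - ecr q i j k r t) := by
  classical
  set F := (Fin.snoc (Fin.snoc (Fin.snoc (Fin.snoc (Fin.snoc i j) k) r) s) t :
      Fin (M+5) → Fin n) with hF
  have hFi : ∀ p : Fin M, F p.castSucc.castSucc.castSucc.castSucc.castSucc = i p := by
    intro p; simp [hF]
  have hFj : F ((Fin.last M).castSucc.castSucc.castSucc.castSucc) = j := by simp [hF]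
  have hFk : F ((Fin.last (M+1)).castSucc.castSucc.castSucc) = k := by simp [hF]
  have hFr : F ((Fin.last (M+2)).castSucc.castSucc) = r := by simp [hF]
  have hFs : F ((Fin.last (M+3)).castSucc) = s := by simp [hF]
  have hFt : F (Fin.last (M+4)) = t := by simp [hF]
  have hval : ∀ a b : Fin (M+5), F a = F b → a.val = b.val :=
    fun a b h => congrArg Fin.val (hdist h)
  have hi : Function.Injective i := by
    intro p p' h
    have := hval _ _ ((hFi p).trans (h.trans (hFi p').symm))
    simpa [Fin.ext_iff] using this
  have hij : ∀ p, i p ≠ j := by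
    intro p h
    have := hval _ _ ((hFi p).trans (h.trans hFj.symm))
    simp [Fin.ext_iff] at this; omega
  have hik : ∀ p, i p ≠ k := by
    intro p h
    have := hval _ _ ((hFi p).trans (h.trans hFk.symm))
    simp [Fin.ext_iff] at this; omega
  have hir : ∀ p, i p ≠ r := by
    intro p h
    have := hval _ _ ((hFi p).trans (h.trans hFr.symm))
    simp [Fin.ext_iff] at this; omega
  have his : ∀ p, i p ≠ s := by
    intro p h
    have := hval _ _ ((hFi p).trans (h.trans hFs.symm))
    simp [Fin.ext_iff] at this; omega
  have hit : ∀ p, i p ≠ t := by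
    intro p h
    have := hval _ _ ((hFi p).trans (h.trans hFt.symm))
    simp [Fin.ext_iff] at this; omega
  have hjr : j ≠ r := by
    intro h
    have := hval _ _ (hFj.trans (h.trans hFr.symm))
    simp [Fin.ext_iff] at this
  have hjt : j ≠ t := by
    intro h
    have := hval _ _ (hFj.trans (h.trans hFt.symm))
    simp [Fin.ext_iff] at this
  have hks : k ≠ s := by
    intro h
    have := hval _ _ (hFk.trans (h.trans hFs.symm))
    simp [Fin.ext_iff] at this
  have hkr : k ≠ r := by
    intro h
    have := hval _ _ (hFk.trans (h.trans hFr.symm))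
    simp [Fin.ext_iff] at this
  have hkt : k ≠ t := by
    intro h
    have := hval _ _ (hFk.trans (h.trans hFt.symm))
    simp [Fin.ext_iff] at this
  -- nonvanishing
  have hDjr : dA q (Fin.snoc (Fin.snoc i j) r) ≠ 0 := hq _ (snoc2_inj hi hij hir hjr)
  have hDjt : dA q (Fin.snoc (Fin.snoc i j) t) ≠ 0 := hq _ (snoc2_inj hi hij hit hjt)
  have hDks : dA q (Fin.snoc (Fin.snoc i k) s) ≠ 0 := hq _ (snoc2_inj hi hik his hks)
  have hDkr : dA q (Fin.snoc (Fin.snoc i k) r) ≠ 0 := hq _ (snoc2_inj hi hik hir hkr)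
  have hDkt : dA q (Fin.snoc (Fin.snoc i k) t) ≠ 0 := hq _ (snoc2_inj hi hik hit hkt)
  -- Plücker relations
  set u : Fin M → Fin (M+2) → ℂ := fun p => (Fin.snoc (q (i p)) (1:ℂ) : Fin (M+2) → ℂ)
    with hu
  set v : Fin n → Fin (M+2) → ℂ := fun z => (Fin.snoc (q z) (1:ℂ) : Fin (M+2) → ℂ) with hv
  have hvB : ∀ x y : Fin n, dA q (Fin.snoc (Fin.snoc i x) y) = Bd u (v x) (v y) :=
    fun x y => dA_eq_Bd q i x y
  have P1 : dA q (Fin.snoc (Fin.snoc i j) k) * dA q (Fin.snoc (Fin.snoc i r) t)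
      - dA q (Fin.snoc (Fin.snoc i j) r) * dA q (Fin.snoc (Fin.snoc i k) t)
      + dA q (Fin.snoc (Fin.snoc i j) t) * dA q (Fin.snoc (Fin.snoc i k) r) = 0 := by
    have := plucker u (v j) (v k) (v r) (v t) (by rw [← hvB]; exact hDkr)
    simp only [← hvB] at this
    exact this
  have P2 : dA q (Fin.snoc (Fin.snoc i j) k) * dA q (Fin.snoc (Fin.snoc i r) s)
      - dA q (Fin.snoc (Fin.snoc i j) r) * dA q (Fin.snoc (Fin.snoc i k) s)
      + dA q (Fin.snoc (Fin.snoc i j) s) * dA q (Fin.snoc (Fin.snoc i k) r) = 0 := by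
    have := plucker u (v j) (v k) (v r) (v s) (by rw [← hvB]; exact hDkr)
    simp only [← hvB] at this
    exact this
  have P3 : dA q (Fin.snoc (Fin.snoc i j) k) * dA q (Fin.snoc (Fin.snoc i t) s)
      - dA q (Fin.snoc (Fin.snoc i j) t) * dA q (Fin.snoc (Fin.snoc i k) s)
      + dA q (Fin.snoc (Fin.snoc i j) s) * dA q (Fin.snoc (Fin.snoc i k) t) = 0 := by
    have := plucker u (v j) (v k) (v t) (v s) (by rw [← hvB]; exact hDkt)
    simp only [← hvB] at this
    exact this
  -- algebra
  unfold ecr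
  set Ajk := dA q (Fin.snoc (Fin.snoc i j) k)
  set Ats := dA q (Fin.snoc (Fin.snoc i t) s)
  set Ajt := dA q (Fin.snoc (Fin.snoc i j) t)
  set Aks := dA q (Fin.snoc (Fin.snoc i k) s)
  set Ars := dA q (Fin.snoc (Fin.snoc i r) s)
  set Ajr := dA q (Fin.snoc (Fin.snoc i j) r)
  set Art := dA q (Fin.snoc (Fin.snoc i r) t)
  set Akt := dA q (Fin.snoc (Fin.snoc i k) t)
  set Ajs := dA q (Fin.snoc (Fin.snoc i j) s)
  set Akr := dA q (Fin.snoc (Fin.snoc i k) r)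
  have h1 : (1:ℂ) - Ajk * Art / (Ajr * Akt) = Ajt * Akr / (Ajr * Akt) := by
    field_simp
    linear_combination -P1
  have h2 : (1:ℂ) - Ajk * Ars / (Ajr * Aks) = Ajs * Akr / (Ajr * Aks) := by
    field_simp
    linear_combination -P2
  rw [h1, h2]
  field_simp
  linear_combination P3
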